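/- Let ℳ be a finite set of d×d complex matrices such that no two distinct elements of ℳ have a common left-eigenvector, i.e., for all M ≠ M' in ℳ there is no nonzero row vector r ∈ ℂ^d with rM = λr and rM' = λ'r for some λ, λ' ∈ ℂ. Let (A_n)_{n≥1} be a sequence with each A_n ∈ ℳ which is not eventually constant, and suppose P_n ≠ 0 for every n. Then the sequence n ↦ P_n/‖P_n‖ does not converge. -/

import Mathlib

open Filter Matrix

/-- `‖X‖`: sum of the moduli of the entries of a complex matrix. -/
noncomputable def matEntrySumNorm {d : ℕ} (M : Matrix (Fin d) (Fin d) ℂ) : ℝ :=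
  ∑ i, ∑ j, ‖M i j‖

/-- `P_n = A_1 ⋯ A_n` (ordered product). -/
noncomputable def matProd {d : ℕ} (A : ℕ → Matrix (Fin d) (Fin d) ℂ) (n : ℕ) :
    Matrix (Fin d) (Fin d) ℂ :=
  ((List.range n).map fun i => A (i + 1)).prod

lemma esn_nonneg {d : ℕ} (M : Matrix (Fin d) (Fin d) ℂ) : 0 ≤ matEntrySumNorm M := by
  unfold matEntrySumNorm
  positivity

lemma esn_eq_zero {d : ℕ} {M : Matrix (Fin d) (Fin d) ℂ} :
    matEntrySumNorm M = 0 ↔ M = 0 := by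
  unfold matEntrySumNorm
  constructor
  · intro h
    ext i j
    have h1 : ∀ i ∈ Finset.univ, (∑ j, ‖M i j‖) = 0 := by
      refine (Finset.sum_eq_zero_iff_of_nonneg ?_).mp h
      intro i _
      positivity
    have h2 : ∀ j ∈ Finset.univ, ‖M i j‖ = 0 := by
      refine (Finset.sum_eq_zero_iff_of_nonneg ?_).mp (h1 i (Finset.mem_univ i))
      intro j _
      positivity
    simpa using h2 j (Finset.mem_univ j)
  · intro h; simp [h]

lemma esn_smul {d : ℕ} (c : ℝ) (hc : 0 ≤ c) (M : Matrix (Fin d) (Fin d) ℂ) :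
    matEntrySumNorm (c • M) = c * matEntrySumNorm M := by
  unfold matEntrySumNorm
  rw [Finset.mul_sum]
  refine Finset.sum_congr rfl fun i _ => ?_
  rw [Finset.mul_sum]
  refine Finset.sum_congr rfl fun j _ => ?_
  simp [Matrix.smul_apply, Complex.real_smul, _root_.map_mul, abs_of_nonneg hc]

lemma esn_continuous {d : ℕ} : Continuous (matEntrySumNorm (d := d)) := by
  unfold matEntrySumNorm
  refine continuous_finset_sum _ fun i _ => continuous_finset_sum _ fun j _ => ?_
  exact continuous_norm.comp ((continuous_apply j).comp (continuous_apply i))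

lemma matProd_succ {d : ℕ} (A : ℕ → Matrix (Fin d) (Fin d) ℂ) (n : ℕ) :
    matProd A (n + 1) = matProd A n * A (n + 1) := by
  unfold matProd
  rw [List.range_succ, List.map_append, List.prod_append]
  simp

/-- pigeonhole: some value of `g` on the infinite set `S` has infinite fiber within `S`. -/
lemma exists_infinite_fiber_in {d : ℕ} {ℳ : Set (Matrix (Fin d) (Fin d) ℂ)}
    (hfin : ℳ.Finite) {S : Set ℕ} (hS : S.Infinite)
    (g : ℕ → Matrix (Fin d) (Fin d) ℂ) (hg : ∀ n, g n ∈ ℳ) :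
    ∃ M ∈ ℳ, {n | n ∈ S ∧ g n = M}.Infinite := by
  by_contra h
  push_neg at h
  have hfin2 : (⋃ M ∈ ℳ, {n | n ∈ S ∧ g n = M}).Finite := by
    refine Set.Finite.biUnion hfin fun M hM => ?_
    have := h M hM
    exact this
  refine hS (hfin2.subset fun n hn => ?_)
  exact Set.mem_biUnion (hg n) ⟨hn, rfl⟩

/-- key analytic lemma: if `A (n+1) = M` infinitely often, the limit `Q` satisfies `Q M = c Q`. -/
lemma key_eigen {d : ℕ} (A : ℕ → Matrix (Fin d) (Fin d) ℂ)
    (hP : ∀ n, matProd A n ≠ 0) (Q : Matrix (Fin d) (Fin d) ℂ)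
    (hQ : Tendsto (fun n => (matEntrySumNorm (matProd A n))⁻¹ • matProd A n) atTop (nhds Q))
    (M : Matrix (Fin d) (Fin d) ℂ) (hS : {n | A (n + 1) = M}.Infinite) :
    ∃ c : ℂ, Q * M = c • Q := by
  set f : ℕ → Matrix (Fin d) (Fin d) ℂ :=
    fun n => (matEntrySumNorm (matProd A n))⁻¹ • matProd A n with hf
  have hPnorm : ∀ n, 0 < matEntrySumNorm (matProd A n) := fun n =>
    lt_of_le_of_ne (esn_nonneg _) (fun h => hP n (esn_eq_zero.mp h.symm))
  by_cases hQM : Q * M = 0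
  · exact ⟨0, by simp [hQM]⟩
  have hc : 0 < matEntrySumNorm (Q * M) :=
    lt_of_le_of_ne (esn_nonneg _) (fun h => hQM (esn_eq_zero.mp h.symm))
  set c : ℝ := matEntrySumNorm (Q * M) with hcdef
  -- the filter along the subsequence
  have hfreq : ∃ᶠ n in atTop, n ∈ {n | A (n + 1) = M} :=
    Nat.frequently_atTop_iff_infinite.mpr hS
  haveI hL : (atTop ⊓ Filter.principal {n | A (n + 1) = M}).NeBot :=
    frequently_mem_iff_neBot.mp hfreq
  set L := atTop ⊓ Filter.principal {n | A (n + 1) = M} with hLdef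
  have h1 : Tendsto f L (nhds Q) := hQ.mono_left inf_le_left
  have h2 : Tendsto (fun n => f (n + 1)) L (nhds Q) :=
    (hQ.comp (tendsto_add_atTop_nat 1)).mono_left inf_le_left
  have h3 : Tendsto (fun n => f n * M) L (nhds (Q * M)) := by
    have hcont : Continuous fun X : Matrix (Fin d) (Fin d) ℂ => X * M :=
      Continuous.matrix_mul continuous_id continuous_const
    exact (hcont.tendsto Q).comp h1
  have h4 : Tendsto (fun n => matEntrySumNorm (f n * M)) L (nhds c) :=
    (esn_continuous.tendsto (Q * M)).comp h3
  have h5 : Tendsto (fun n => (matEntrySumNorm (f n * M))⁻¹ • (f n * M)) L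
      (nhds (c⁻¹ • (Q * M))) :=
    (h4.inv₀ hc.ne').smul h3
  -- along L, f (n+1) is the normalization of f n * M
  have h6 : ∀ n ∈ {n | A (n + 1) = M},
      f (n + 1) = (matEntrySumNorm (f n * M))⁻¹ • (f n * M) := by
    intro n hn
    have hAn : A (n + 1) = M := hn
    have hPsucc : matProd A (n + 1) = matProd A n * M := by
      rw [matProd_succ, hAn]
    have hfM : f n * M = (matEntrySumNorm (matProd A n))⁻¹ • (matProd A n * M) := by
      rw [hf]
      exact smul_mul _ _ _
    have hnorm : matEntrySumNorm (f n * M)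
        = (matEntrySumNorm (matProd A n))⁻¹ * matEntrySumNorm (matProd A n * M) := by
      rw [hfM, esn_smul _ (inv_nonneg.mpr (esn_nonneg _))]
    have hp : matEntrySumNorm (matProd A n) ≠ 0 := (hPnorm n).ne'
    have hq : matEntrySumNorm (matProd A n * M) ≠ 0 := by
      rw [← hPsucc]; exact (hPnorm (n + 1)).ne'
    rw [hf]
    simp only []
    rw [hnorm, hfM, hPsucc, smul_smul]
    congr 1
    field_simp
  have h7 : Tendsto (fun n => f (n + 1)) L (nhds (c⁻¹ • (Q * M))) := by
    refine h5.congr' ?_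
    rw [hLdef, eventuallyEq_iff_exists_mem]
    refine ⟨{n | A (n + 1) = M}, ?_, fun n hn => (h6 n hn).symm⟩
    exact mem_inf_of_right (mem_principal_self _)
  have huniq : Q = c⁻¹ • (Q * M) := tendsto_nhds_unique h2 h7
  refine ⟨(c : ℂ), ?_⟩
  have h8 : (c : ℝ) • Q = Q * M := by
    conv_lhs => rw [huniq]
    rw [smul_smul, mul_inv_cancel₀ hc.ne', one_smul]
  rw [← h8]
  ext i j
  simp [Complex.real_smul]

lemma row_mul {d : ℕ} (Q M : Matrix (Fin d) (Fin d) ℂ) (i : Fin d) :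
    Q i ᵥ* M = (Q * M) i := by
  funext j
  simp [Matrix.vecMul, Matrix.mul_apply, dotProduct]

/-- Corollary 3.4: if the `A_n` range in a finite set `ℳ` no two distinct
elements of which share a left-eigenvector, if the sequence is not eventually constant,
and if `P_n ≠ 0` for all `n`, then `P_n/‖P_n‖` diverges. -/
theorem normalized_product_diverges_of_finite_set {d : ℕ}
    (ℳ : Set (Matrix (Fin d) (Fin d) ℂ)) (hfin : ℳ.Finite)
    (hnoeig : ∀ M ∈ ℳ, ∀ M' ∈ ℳ, M ≠ M' →
      ¬ ∃ r : Fin d → ℂ, r ≠ 0 ∧ ∃ lam lam' : ℂ,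
        r ᵥ* M = lam • r ∧ r ᵥ* M' = lam' • r)
    (A : ℕ → Matrix (Fin d) (Fin d) ℂ)
    (hmem : ∀ n, A n ∈ ℳ)
    (hnc : ¬ ∃ N : ℕ, ∀ n ≥ N, A n = A N)
    (hP : ∀ n, matProd A n ≠ 0) :
    ¬ ∃ Q : Matrix (Fin d) (Fin d) ℂ,
      Tendsto (fun n => (matEntrySumNorm (matProd A n))⁻¹ • matProd A n)
        atTop (nhds Q) := by
  rintro ⟨Q, hQ⟩
  have hPnorm : ∀ n, 0 < matEntrySumNorm (matProd A n) := fun n =>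
    lt_of_le_of_ne (esn_nonneg _) (fun h => hP n (esn_eq_zero.mp h.symm))
  -- norm of Q is 1, in particular Q ≠ 0
  have hfnorm : ∀ n, matEntrySumNorm ((matEntrySumNorm (matProd A n))⁻¹ • matProd A n) = 1 := by
    intro n
    rw [esn_smul _ (inv_nonneg.mpr (esn_nonneg _))]
    exact inv_mul_cancel₀ (hPnorm n).ne'
  have hQnorm : matEntrySumNorm Q = 1 := by
    have h1 := (esn_continuous.tendsto Q).comp hQ
    have h2 : Tendsto (fun n : ℕ => (1 : ℝ)) atTop (nhds 1) := tendsto_const_nhds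
    refine tendsto_nhds_unique ?_ h2
    refine h1.congr fun n => ?_
    simp [Function.comp, hfnorm n]
  have hQ0 : Q ≠ 0 := by
    intro h
    rw [h, esn_eq_zero.mpr rfl] at hQnorm
    norm_num at hQnorm
  -- find M with infinite fiber
  obtain ⟨M, hMmem, hMinf⟩ :=
    exists_infinite_fiber_in hfin Set.infinite_univ (fun n => A (n + 1)) (fun n => hmem (n + 1))
  -- the set of places where A (n+1) ≠ M is infinite
  have hTinf : {n | A (n + 1) ≠ M}.Infinite := by
    intro hTfin
    obtain ⟨N, hN⟩ := hTfin.bddAbove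
    refine hnc ⟨N + 2, fun n hn => ?_⟩
    have key : ∀ m ≥ N + 2, A m = M := by
      intro m hm
      obtain ⟨k, rfl⟩ : ∃ k, m = k + 1 := ⟨m - 1, by omega⟩
      by_contra hk
      have := hN hk
      omega
    rw [key n hn, key (N + 2) (le_refl _)]
  obtain ⟨M', hM'mem, hM'inf⟩ :=
    exists_infinite_fiber_in hfin hTinf (fun n => A (n + 1)) (fun n => hmem (n + 1))
  have hne : M ≠ M' := by
    obtain ⟨n, hn⟩ := hM'inf.nonempty
    exact fun h => hn.1 (h ▸ hn.2.symm ▸ hn.2)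
  -- eigen relations
  obtain ⟨c, hcQ⟩ := key_eigen A hP Q hQ M (hMinf.mono fun n hn => hn.2)
  obtain ⟨c', hc'Q⟩ := key_eigen A hP Q hQ M' (hM'inf.mono fun n hn => hn.2)
  -- extract a nonzero row
  obtain ⟨i, hi⟩ : ∃ i, Q i ≠ 0 := by
    by_contra h
    push_neg at h
    exact hQ0 (funext h)
  refine hnoeig M hMmem M' hM'mem hne ⟨Q i, hi, c, c', ?_, ?_⟩
  · rw [row_mul, hcQ]; rfl
  · rw [row_mul, hc'Q]; rfl
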